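/- Let {a,b,c} be a 3-element set. A set D of linear orders on {a,b,c} is a Condorcet domain if and only if there exist x ∈ {a,b,c} and a position p ∈ {top, middle, bottom} such that no order in D places x in position p. -/

import Mathlib

/-- The majority relation of a profile `P` of `k` voters: `a` beats `b` if more voters
rank `a` above `b` than rank `b` above `a`. -/
def Maj {α : Type*} {k : ℕ} (P : Fin k → α → α → Prop) (a b : α) : Prop :=
  Nat.card {i : Fin k // P i a b} > Nat.card {i : Fin k // P i b a}

/-- `D` is a Condorcet domain: a set of linear orders (strict total orders) on the
alternatives such that every profile with an odd number of voters drawn from `D`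
has a transitive majority relation. -/
def IsCondorcetDomain {α : Type*} (D : Set (α → α → Prop)) : Prop :=
  (∀ r ∈ D, IsStrictTotalOrder α r) ∧
  ∀ (k : ℕ), Odd k → ∀ P : Fin k → α → α → Prop,
    (∀ i, P i ∈ D) → Transitive (Maj P)

/-- `rankIn r x` is the position (0 = top, 1 = middle, 2 = bottom on three
alternatives) of `x` in the linear order `r`. -/
noncomputable def rankIn {α : Type*} (r : α → α → Prop) (x : α) : ℕ :=
  Nat.card {y : α // r y x}

section Counting
variable {n : ℕ}

lemma natCard_subtype_eq_filter (Q : Fin n → Prop) [DecidablePred Q] :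
    Nat.card {i // Q i} = (Finset.univ.filter Q).card := by
  rw [Nat.card_eq_fintype_card, Fintype.card_subtype]

lemma card_mono {Q R : Fin n → Prop} (h : ∀ i, Q i → R i) :
    Nat.card {i // Q i} ≤ Nat.card {i // R i} := by
  classical
  rw [natCard_subtype_eq_filter, natCard_subtype_eq_filter]
  exact Finset.card_le_card (fun i hi => by
    simp only [Finset.mem_filter] at *; exact ⟨hi.1, h i hi.2⟩)

lemma card_congr' {Q R : Fin n → Prop} (h : ∀ i, Q i ↔ R i) :
    Nat.card {i // Q i} = Nat.card {i // R i} := by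
  classical
  rw [natCard_subtype_eq_filter, natCard_subtype_eq_filter]
  congr 1
  exact Finset.filter_congr (fun i _ => by simp [h i])

lemma card_add_compl (Q : Fin n → Prop) :
    Nat.card {i // Q i} + Nat.card {i // ¬ Q i} = n := by
  classical
  rw [natCard_subtype_eq_filter, natCard_subtype_eq_filter]
  simpa using Finset.card_filter_add_card_filter_not (s := Finset.univ) Q

end Counting

section MajLemmas
variable {k : ℕ} {P : Fin k → Fin 3 → Fin 3 → Prop}

lemma sto_iff_not {r : Fin 3 → Fin 3 → Prop} (hr : IsStrictTotalOrder (Fin 3) r)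
    {x y : Fin 3} (hxy : x ≠ y) : r x y ↔ ¬ r y x := by
  constructor
  · intro h h'
    exact hr.irrefl x (hr.trans _ _ _ h h')
  · intro h
    rcases (haveI := hr; @trichotomous_of _ r _ x y) with h' | h' | h'
    · exact h'
    · exact absurd h' hxy
    · exact absurd h' h

lemma maj_irrefl {a : Fin 3} (h : Maj P a a) : False := lt_irrefl _ h

lemma maj_asymm {a b : Fin 3} (h1 : Maj P a b) (h2 : Maj P b a) : False :=
  lt_asymm h1 h2

lemma card_pair_eq (hP : ∀ i, IsStrictTotalOrder (Fin 3) (P i))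
    {x y : Fin 3} (hxy : x ≠ y) :
    Nat.card {i // P i x y} + Nat.card {i // P i y x} = k := by
  have ec : Nat.card {i // P i y x} = Nat.card {i // ¬ P i x y} :=
    card_congr' (fun i => sto_iff_not (hP i) hxy.symm)
  rw [ec]
  exact card_add_compl _

lemma maj_of_subset (hP : ∀ i, IsStrictTotalOrder (Fin 3) (P i))
    {x y z w : Fin 3} (hxy : x ≠ y) (hzw : z ≠ w)
    (hsub : ∀ i, P i x y → P i z w) (hm : Maj P x y) : Maj P z w := by
  have h1 : Nat.card {i // P i x y} ≤ Nat.card {i // P i z w} := card_mono hsub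
  have e1 := card_pair_eq hP hxy
  have e2 := card_pair_eq hP hzw
  have hm' : Nat.card {i // P i y x} < Nat.card {i // P i x y} := hm
  show Nat.card {i // P i w z} < Nat.card {i // P i z w}
  omega

lemma maj_total (hP : ∀ i, IsStrictTotalOrder (Fin 3) (P i)) (hodd : Odd k)
    {x z : Fin 3} (hxz : x ≠ z) (h : ¬ Maj P x z) : Maj P z x := by
  have e1 := card_pair_eq hP hxz
  have h' : ¬ (Nat.card {i // P i z x} < Nat.card {i // P i x z}) := h
  show Nat.card {i // P i x z} < Nat.card {i // P i z x}
  obtain ⟨m, hm⟩ := hodd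
  omega

end MajLemmas
section Rank
open Finset
variable {r : Fin 3 → Fin 3 → Prop} (hr : IsStrictTotalOrder (Fin 3) r)

lemma rankIn_eq_filter (x : Fin 3) [DecidablePred (r · x)] :
    rankIn r x = (univ.filter (r · x)).card := by
  rw [rankIn, Nat.card_eq_fintype_card, Fintype.card_subtype]

include hr

lemma rank_lt3 (x : Fin 3) : rankIn r x < 3 := by
  classical
  rw [rankIn_eq_filter]
  have hsub : univ.filter (r · x) ⊆ univ.erase x := by
    intro y hy
    simp only [mem_filter, mem_erase, mem_univ, and_true, true_and] at *
    intro h; exact hr.irrefl x (h ▸ hy)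
  calc (univ.filter (r · x)).card ≤ (univ.erase x).card := card_le_card hsub
    _ = 2 := by rw [card_erase_of_mem (mem_univ x)]; simp
    _ < 3 := by norm_num

lemma rank_lt_of_rel {a b : Fin 3} (hab : r a b) : rankIn r a < rankIn r b := by
  classical
  rw [rankIn_eq_filter, rankIn_eq_filter]
  apply card_lt_card
  constructor
  · intro y hy
    simp only [mem_filter, mem_univ, true_and] at *
    exact hr.trans _ _ _ hy hab
  · intro hsub
    have ha : a ∈ univ.filter (r · b) := by simp [hab]
    have := hsub ha
    simp only [mem_filter] at this
    exact hr.irrefl a this.2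

lemma rank_lt_iff {a b : Fin 3} : r a b ↔ rankIn r a < rankIn r b := by
  constructor
  · exact rank_lt_of_rel hr
  · intro h
    rcases (haveI := hr; @trichotomous_of _ r _ a b) with h' | h' | h'
    · exact h'
    · subst h'; exact absurd h (lt_irrefl _)
    · have := rank_lt_of_rel hr h'
      omega

lemma rank_inj {a b : Fin 3} (h : rankIn r a = rankIn r b) : a = b := by
  rcases (haveI := hr; @trichotomous_of _ r _ a b) with h' | h' | h'
  · have := rank_lt_of_rel hr h'; omega
  · exact h'
  · have := rank_lt_of_rel hr h'; omega

lemma exists_above_of_rank_ne_zero {a : Fin 3} (h : rankIn r a ≠ 0) : ∃ y, r y a := by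
  by_contra hc
  push_neg at hc
  have : IsEmpty {y : Fin 3 // r y a} := ⟨fun ⟨y, hy⟩ => hc y hy⟩
  exact h (Nat.card_of_isEmpty)

lemma not_above_of_rank_eq_zero {a : Fin 3} (h : rankIn r a = 0) : ∀ y, ¬ r y a := by
  intro y hy
  have : Nonempty {y : Fin 3 // r y a} := ⟨⟨y, hy⟩⟩
  have := Nat.card_pos (α := {y : Fin 3 // r y a})
  rw [rankIn] at h
  omega

lemma exists_below_of_rank_ne_two {a : Fin 3} (h : rankIn r a ≠ 2) : ∃ y, r a y := by
  classical
  by_contra hc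
  push_neg at hc
  apply h
  rw [rankIn_eq_filter]
  have : univ.filter (r · a) = univ.erase a := by
    ext y
    simp only [mem_filter, mem_erase, mem_univ, and_true, true_and]
    constructor
    · intro hy h'; exact hr.irrefl a (h' ▸ hy)
    · intro hy
      rcases (haveI := hr; @trichotomous_of _ r _ y a) with h' | h' | h'
      · exact h'
      · exact absurd h' hy
      · exact absurd h' (hc y)
  rw [this, card_erase_of_mem (mem_univ a)]
  simp

lemma rank_le_one_of_rel {a b : Fin 3} (hab : r a b) : rankIn r a ≤ 1 := by
  classical
  rw [rankIn_eq_filter]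
  have hsub : univ.filter (r · a) ⊆ (univ.erase a).erase b := by
    intro y hy
    simp only [mem_filter, mem_erase, mem_univ, and_true, true_and] at *
    refine ⟨fun h => ?_, fun h => hr.irrefl a (h ▸ hy)⟩
    subst h
    exact hr.irrefl a (hr.trans _ _ _ hab hy)
  calc (univ.filter (r · a)).card ≤ ((univ.erase a).erase b).card := card_le_card hsub
    _ ≤ 1 := by
        rcases Finset.eq_empty_or_nonempty ((univ.erase a).erase b) with h | h
        · simp [h]
        · have hb : b ≠ a := fun h => hr.irrefl a (h ▸ hab)
          rw [card_erase_of_mem (by simp [hb]), card_erase_of_mem (mem_univ a)]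
          simp

end Rank

lemma tri3 (a b c y : Fin 3) (h1 : a ≠ b) (h2 : b ≠ c) (h3 : a ≠ c) (h4 : y ≠ a)
    (h5 : y ≠ b) : y = c := by
  have := a.isLt; have := b.isLt; have := c.isLt; have := y.isLt
  simp only [Fin.ext_iff, ne_eq] at *
  omega

lemma cycle_contra {k : ℕ} {P : Fin k → Fin 3 → Fin 3 → Prop}
    (hP : ∀ i, IsStrictTotalOrder (Fin 3) (P i))
    {p : Fin 3} {a : Fin 3} (hN : ∀ i, rankIn (P i) a ≠ (p : ℕ))
    {b c : Fin 3} (hab : a ≠ b) (hbc : b ≠ c) (hac : a ≠ c)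
    (m1 : Maj P a b) (m2 : Maj P b c) (m3 : Maj P c a) : False := by
  fin_cases p
  · -- never top
    have hN' : ∀ i, rankIn (P i) a ≠ 0 := by simpa using hN
    have hsub : ∀ i, P i a b → P i c b := by
      intro i h
      obtain ⟨y, hy⟩ := exists_above_of_rank_ne_zero (hP i) (hN' i)
      have hya : y ≠ a := fun h' => (hP i).irrefl a (h' ▸ hy)
      have hyb : y ≠ b := fun h' => (hP i).irrefl a ((hP i).trans a b a h (h' ▸ hy))
      have hyc := tri3 a b c y hab hbc hac hya hyb
      exact hyc ▸ ((hP i).trans y a b hy h)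
    exact maj_asymm (maj_of_subset hP hab hbc.symm hsub m1) m2
  · -- never middle
    have hN' : ∀ i, rankIn (P i) a ≠ 1 := by simpa using hN
    have hsub : ∀ i, P i a b → P i a c := by
      intro i h
      have h1 : rankIn (P i) a ≤ 1 := rank_le_one_of_rel (hP i) h
      have h0 : rankIn (P i) a = 0 := by have := hN' i; omega
      have htop := not_above_of_rank_eq_zero (hP i) h0
      rcases (haveI := hP i; @trichotomous_of _ (P i) _ a c) with h' | h' | h'
      · exact h'
      · exact absurd h' hac
      · exact absurd h' (htop c)
    exact maj_asymm (maj_of_subset hP hab hac hsub m1) m3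
  · -- never bottom
    have hN' : ∀ i, rankIn (P i) a ≠ 2 := by simpa using hN
    have hsub : ∀ i, P i c a → P i c b := by
      intro i h
      obtain ⟨y, hy⟩ := exists_below_of_rank_ne_two (hP i) (hN' i)
      have hya : y ≠ a := fun h' => (hP i).irrefl a (h' ▸ hy)
      have hyc : y ≠ c := fun h' => (hP i).irrefl a ((hP i).trans a c a (h' ▸ hy) h)
      have hyb := tri3 a c b y hac hbc.symm hab hya hyc
      exact hyb ▸ ((hP i).trans c a y h hy)
    exact maj_asymm (maj_of_subset hP hac.symm hbc.symm hsub m3) m2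

lemma exhaust3 (u v w x : Fin 3) (h1 : u ≠ v) (h2 : v ≠ w) (h3 : u ≠ w) :
    x = u ∨ x = v ∨ x = w := by
  have := u.isLt; have := v.isLt; have := w.isLt; have := x.isLt
  simp only [Fin.ext_iff, ne_eq] at *
  omega

lemma condorcet_of_never {D : Set (Fin 3 → Fin 3 → Prop)}
    (hlin : ∀ r ∈ D, IsStrictTotalOrder (Fin 3) r)
    {x p : Fin 3} (hN : ∀ r ∈ D, rankIn r x ≠ (p : ℕ)) :
    ∀ (k : ℕ), Odd k → ∀ P : Fin k → Fin 3 → Fin 3 → Prop,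
      (∀ i, P i ∈ D) → Transitive (Maj P) := by
  intro k hodd P hPD u v w h1 h2
  have hP : ∀ i, IsStrictTotalOrder (Fin 3) (P i) := fun i => hlin _ (hPD i)
  have hN' : ∀ i, rankIn (P i) x ≠ (p : ℕ) := fun i => hN _ (hPD i)
  by_contra h3
  have huv : u ≠ v := by rintro rfl; exact maj_irrefl h1
  have hvw : v ≠ w := by rintro rfl; exact maj_irrefl h2
  have huw : u ≠ w := by rintro rfl; exact maj_asymm h1 h2
  have h4 : Maj P w u := maj_total hP hodd huw h3
  rcases exhaust3 u v w x huv hvw huw with rfl | rfl | rfl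
  · exact cycle_contra hP hN' huv hvw huw h1 h2 h4
  · exact cycle_contra hP hN' hvw huw.symm huv.symm h2 h4 h1
  · exact cycle_contra hP hN' huw.symm huv hvw.symm h4 h1 h2

section Forward

def cnt (σ1 σ2 σ3 : Equiv.Perm (Fin 3)) (a b : Fin 3) : ℕ :=
  (if σ1 a < σ1 b then 1 else 0) + (if σ2 a < σ2 b then 1 else 0) + (if σ3 a < σ3 b then 1 else 0)

set_option maxHeartbeats 4000000 in
set_option maxRecDepth 10000 in
lemma key : ∀ S : Finset (Equiv.Perm (Fin 3)), (∀ x p : Fin 3, ∃ σ ∈ S, σ x = p) →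
    ∃ σ1 ∈ S, ∃ σ2 ∈ S, ∃ σ3 ∈ S, ∃ x y z : Fin 3, x ≠ y ∧ y ≠ z ∧ x ≠ z ∧
      2 ≤ cnt σ1 σ2 σ3 x y ∧ 2 ≤ cnt σ1 σ2 σ3 y z ∧ 2 ≤ cnt σ1 σ2 σ3 z x := by decide

noncomputable def toPerm {r : Fin 3 → Fin 3 → Prop} (hr : IsStrictTotalOrder (Fin 3) r) :
    Equiv.Perm (Fin 3) :=
  Equiv.ofBijective (fun x => ⟨rankIn r x, rank_lt3 hr x⟩)
    (Finite.injective_iff_bijective.mp (fun x y h => rank_inj hr (by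
      simpa only [Fin.mk.injEq] using h)))

lemma toPerm_val {r : Fin 3 → Fin 3 → Prop} (hr : IsStrictTotalOrder (Fin 3) r) (x : Fin 3) :
    (toPerm hr x : ℕ) = rankIn r x := rfl

lemma toPerm_spec {r : Fin 3 → Fin 3 → Prop} (hr : IsStrictTotalOrder (Fin 3) r) :
    ∀ a b, r a b ↔ toPerm hr a < toPerm hr b := by
  intro a b
  rw [Fin.lt_def, toPerm_val, toPerm_val]
  exact rank_lt_iff hr

lemma card3_eq (Q : Fin 3 → Prop) [DecidablePred Q] :
    Nat.card {i // Q i} =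
      (if Q 0 then 1 else 0) + (if Q 1 then 1 else 0) + (if Q 2 then 1 else 0) := by
  rw [natCard_subtype_eq_filter, Finset.card_filter, Fin.sum_univ_three]

lemma cnt_sum {σ1 σ2 σ3 : Equiv.Perm (Fin 3)} {a b : Fin 3} (hab : a ≠ b) :
    cnt σ1 σ2 σ3 a b + cnt σ1 σ2 σ3 b a = 3 := by
  have one : ∀ σ : Equiv.Perm (Fin 3),
      (if σ a < σ b then 1 else 0) + (if σ b < σ a then 1 else 0) = 1 := by
    intro σ
    rcases lt_or_gt_of_ne (fun h => hab (σ.injective h)) with h | h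
    · simp [h, asymm h]
    · simp [h, asymm h]
  have h1 := one σ1
  have h2 := one σ2
  have h3 := one σ3
  unfold cnt
  linarith

lemma maj_of_cnt {r1 r2 r3 : Fin 3 → Fin 3 → Prop} {σ1 σ2 σ3 : Equiv.Perm (Fin 3)}
    (e1 : ∀ a b, r1 a b ↔ σ1 a < σ1 b) (e2 : ∀ a b, r2 a b ↔ σ2 a < σ2 b)
    (e3 : ∀ a b, r3 a b ↔ σ3 a < σ3 b)
    {a b : Fin 3} (hab : a ≠ b) (hc : 2 ≤ cnt σ1 σ2 σ3 a b) :
    Maj ![r1, r2, r3] a b := by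
  classical
  have key1 : ∀ a b : Fin 3, Nat.card {i : Fin 3 // ![r1, r2, r3] i a b} = cnt σ1 σ2 σ3 a b := by
    intro a b
    rw [card3_eq]
    show (if r1 a b then 1 else 0) + (if r2 a b then 1 else 0) + (if r3 a b then 1 else 0) = _
    rw [if_congr (e1 a b) rfl rfl, if_congr (e2 a b) rfl rfl, if_congr (e3 a b) rfl rfl]
    rfl
  have hsum := cnt_sum (σ1 := σ1) (σ2 := σ2) (σ3 := σ3) hab
  show Nat.card {i : Fin 3 // ![r1, r2, r3] i b a} < Nat.card {i : Fin 3 // ![r1, r2, r3] i a b}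
  rw [key1, key1]
  omega

end Forward


/-- Sen's characterization on a triple: a set of linear orders on a 3-element set is a
Condorcet domain iff some alternative never occupies some fixed position. -/
theorem isCondorcetDomain_iff_never_condition (D : Set (Fin 3 → Fin 3 → Prop))
    (hlin : ∀ r ∈ D, IsStrictTotalOrder (Fin 3) r) :
    IsCondorcetDomain D ↔
      ∃ x : Fin 3, ∃ p : Fin 3, ∀ r ∈ D, rankIn r x ≠ (p : ℕ) := by
  classical
  constructor
  · intro hcd
    by_contra hex
    push_neg at hex
    try simp only [not_not] at hex
    set S : Finset (Equiv.Perm (Fin 3)) :=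
      Finset.univ.filter (fun σ => ∃ r ∈ D, ∀ a b, r a b ↔ σ a < σ b) with hSdef
    have hS : ∀ x p : Fin 3, ∃ σ ∈ S, σ x = p := by
      intro x p
      obtain ⟨r, hrD, hrank⟩ := hex x p
      have hr := hlin r hrD
      refine ⟨toPerm hr, ?_, ?_⟩
      · simp only [hSdef, Finset.mem_filter, Finset.mem_univ, true_and]
        exact ⟨r, hrD, toPerm_spec hr⟩
      · apply Fin.ext
        rw [toPerm_val]
        exact hrank
    obtain ⟨σ1, hσ1, σ2, hσ2, σ3, hσ3, x, y, z, hxy, hyz, hxz, c1, c2, c3⟩ := key S hS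
    rw [hSdef, Finset.mem_filter] at hσ1 hσ2 hσ3
    obtain ⟨r1, hr1D, e1⟩ := hσ1.2
    obtain ⟨r2, hr2D, e2⟩ := hσ2.2
    obtain ⟨r3, hr3D, e3⟩ := hσ3.2
    have hPD : ∀ i : Fin 3, (![r1, r2, r3] : Fin 3 → Fin 3 → Fin 3 → Prop) i ∈ D := by
      intro i
      fin_cases i <;> simpa
    have m1 : Maj ![r1, r2, r3] x y := maj_of_cnt e1 e2 e3 hxy c1
    have m2 : Maj ![r1, r2, r3] y z := maj_of_cnt e1 e2 e3 hyz c2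
    have m3 : Maj ![r1, r2, r3] z x := maj_of_cnt e1 e2 e3 (Ne.symm hxz) c3
    have htrans := hcd.2 3 ⟨1, rfl⟩ ![r1, r2, r3] hPD
    exact maj_asymm (htrans m1 m2) m3
  · rintro ⟨x, p, hN⟩
    exact ⟨hlin, condorcet_of_never hlin hN⟩
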